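/- Let P and Q be distributions on Z, let f be a hypothesis, and let g (resp. k) be the labeling function under Q (resp. P), all with values in [0,1]. Define L_P(f,g) = E_P[|f − g|] and similarly for other pairs. Then L_Q(f,g) ≤ L_P(f,k) + (1/2) d_{HΔH}(P,Q) + min{ E_P[|k − g|], E_Q[|k − g|] }, where d_{HΔH} is the HΔH-divergence of a hypothesis class H containing f, g, k as (measurable) functions whose pairwise disagreement losses are bounded by the divergence. -/

import Mathlib

open MeasureTheory

lemma int_abs_sub {Z : Type*} [MeasurableSpace Z] (μ : Measure Z)
    [IsProbabilityMeasure μ] (u v : Z → ℝ) (hu : Measurable u) (hv : Measurable v)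
    (hu01 : ∀ z, u z ∈ Set.Icc (0 : ℝ) 1) (hv01 : ∀ z, v z ∈ Set.Icc (0 : ℝ) 1) :
    Integrable (fun z => |u z - v z|) μ := by
  apply Integrable.mono' (integrable_const (1 : ℝ))
    ((hu.sub hv).abs.aestronglyMeasurable)
  filter_upwards with z
  rw [Real.norm_eq_abs, abs_abs]
  have h1 := hu01 z; have h2 := hv01 z
  simp only [Set.mem_Icc] at h1 h2
  rw [Pi.sub_apply, abs_sub_le_iff]; constructor <;> linarith

lemma tri_int {Z : Type*} [MeasurableSpace Z] (μ : Measure Z)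
    [IsProbabilityMeasure μ] (u v w : Z → ℝ) (hu : Measurable u) (hv : Measurable v)
    (hw : Measurable w)
    (hu01 : ∀ z, u z ∈ Set.Icc (0 : ℝ) 1) (hv01 : ∀ z, v z ∈ Set.Icc (0 : ℝ) 1)
    (hw01 : ∀ z, w z ∈ Set.Icc (0 : ℝ) 1) :
    (∫ z, |u z - v z| ∂μ) ≤ (∫ z, |u z - w z| ∂μ) + ∫ z, |w z - v z| ∂μ := by
  rw [← integral_add (int_abs_sub μ u w hu hw hu01 hw01)
    (int_abs_sub μ w v hw hv hw01 hv01)]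
  apply integral_mono (int_abs_sub μ u v hu hv hu01 hv01)
    ((int_abs_sub μ u w hu hw hu01 hw01).add (int_abs_sub μ w v hw hv hw01 hv01))
  intro z
  have := abs_sub_le (u z) (w z) (v z)
  simpa using this

theorem multitask_core_bound {Z : Type*} [MeasurableSpace Z]
    (P Q : Measure Z) [IsProbabilityMeasure P] [IsProbabilityMeasure Q]
    (f g k : Z → ℝ)
    (hf : Measurable f) (hg : Measurable g) (hk : Measurable k)
    (hf01 : ∀ z, f z ∈ Set.Icc (0 : ℝ) 1)
    (hg01 : ∀ z, g z ∈ Set.Icc (0 : ℝ) 1)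
    (hk01 : ∀ z, k z ∈ Set.Icc (0 : ℝ) 1)
    (d : ℝ) (hd : 0 ≤ d)
    (hdiv_fg : |(∫ z, |f z - g z| ∂P) - ∫ z, |f z - g z| ∂Q| ≤ d / 2)
    (hdiv_fk : |(∫ z, |f z - k z| ∂P) - ∫ z, |f z - k z| ∂Q| ≤ d / 2) :
    (∫ z, |f z - g z| ∂Q)
      ≤ (∫ z, |f z - k z| ∂P) + (1 / 2) * d
        + min (∫ z, |k z - g z| ∂P) (∫ z, |k z - g z| ∂Q) := by
  have hP : (∫ z, |f z - g z| ∂Q)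
      ≤ (∫ z, |f z - k z| ∂P) + (1 / 2) * d + ∫ z, |k z - g z| ∂P := by
    have h1 : (∫ z, |f z - g z| ∂Q) ≤ (∫ z, |f z - g z| ∂P) + d / 2 := by
      have := abs_le.mp hdiv_fg; linarith [this.1]
    have h2 := tri_int P f g k hf hg hk hf01 hg01 hk01
    linarith
  have hQ : (∫ z, |f z - g z| ∂Q)
      ≤ (∫ z, |f z - k z| ∂P) + (1 / 2) * d + ∫ z, |k z - g z| ∂Q := by
    have h1 : (∫ z, |f z - k z| ∂Q) ≤ (∫ z, |f z - k z| ∂P) + d / 2 := by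
      have := abs_le.mp hdiv_fk; linarith [this.1]
    have h2 := tri_int Q f g k hf hg hk hf01 hg01 hk01
    linarith
  rcases min_cases (∫ z, |k z - g z| ∂P) (∫ z, |k z - g z| ∂Q) with ⟨h, _⟩ | ⟨h, _⟩ <;>
    rw [h]
  · exact hP
  · exact hQ
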